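/- Let A^(1),…,A^(R), Â^(1),…,Â^(R) be L×L column-stochastic matrices, π ∈ ℝ^R a probability vector, A* = ∑_r π_r A^(r), Â* = ∑_r π_r Â^(r), and p̂ a probability vector. Fix k. Assume: (i) Â^(r)·p̂ = A^(r)·e_k for every r; (ii) Â*_{kk} > Â*_{kj} for all j ≠ k; (iii) Â*_{ii} ≥ Â*_{ji} for all i, j ≠ i; (iv) every entry of A* outside the k-th column equals 1/L; (v) tr(Â*) = tr(A*). Then p̂ = e_k, and for every annotator r the k-th column of Â^(r) equals the k-th column of A^(r). -/

import Mathlib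

theorem stmt_8 (L R : ℕ) (A Ahat : Fin R → Matrix (Fin L) (Fin L) ℝ) (π : Fin R → ℝ)
    (p : Fin L → ℝ) (k : Fin L)
    (hA_nonneg : ∀ r i j, 0 ≤ A r i j) (hA_col : ∀ r j, ∑ i, A r i j = 1)
    (hAhat_nonneg : ∀ r i j, 0 ≤ Ahat r i j) (hAhat_col : ∀ r j, ∑ i, Ahat r i j = 1)
    (hπ_nonneg : ∀ r, 0 ≤ π r) (hπ_sum : ∑ r, π r = 1)
    (hp_nonneg : ∀ j, 0 ≤ p j) (hp_sum : ∑ j, p j = 1)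
    (hmodel : ∀ r, (Ahat r).mulVec p = (A r).mulVec (Pi.single k 1))
    (hrow : ∀ j, j ≠ k → (∑ r, π r • Ahat r) k j < (∑ r, π r • Ahat r) k k)
    (hdiag : ∀ i j, j ≠ i → (∑ r, π r • Ahat r) j i ≤ (∑ r, π r • Ahat r) i i)
    (hoff : ∀ i j, j ≠ k → (∑ r, π r • A r) i j = 1 / L)
    (htr : (∑ r, π r • Ahat r).trace = (∑ r, π r • A r).trace) :
    p = Pi.single k 1 ∧ ∀ r i, Ahat r i k = A r i k := by
  have hLpos : 0 < L := k.pos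
  have hL : (0:ℝ) < L := by exact_mod_cast hLpos
  set Bh : Matrix (Fin L) (Fin L) ℝ := ∑ r, π r • Ahat r with hBhdef
  set B : Matrix (Fin L) (Fin L) ℝ := ∑ r, π r • A r with hBdef
  have hBh_apply : ∀ i j, Bh i j = ∑ r, π r * Ahat r i j := by
    intro i j; simp [hBhdef, Matrix.sum_apply]
  have hB_apply : ∀ i j, B i j = ∑ r, π r * A r i j := by
    intro i j; simp [hBdef, Matrix.sum_apply]
  have hBh_col : ∀ j, ∑ i, Bh i j = 1 := by
    intro j
    simp only [hBh_apply]
    rw [Finset.sum_comm]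
    simp [← Finset.mul_sum, hAhat_col, hπ_sum]
  have hmodel' : ∀ i, ∑ j, Bh i j * p j = B i k := by
    intro i
    have h1 : ∀ r, ∑ j, Ahat r i j * p j = A r i k := by
      intro r
      have h := congrFun (hmodel r) i
      simpa [Matrix.mulVec, dotProduct, Pi.single_apply, mul_ite] using h
    calc ∑ j, Bh i j * p j = ∑ j, ∑ r, π r * Ahat r i j * p j := by
          simp only [hBh_apply, Finset.sum_mul]
      _ = ∑ r, π r * ∑ j, Ahat r i j * p j := by
          rw [Finset.sum_comm]; simp [Finset.mul_sum, mul_assoc]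
      _ = ∑ r, π r * A r i k := by simp only [h1]
      _ = B i k := (hB_apply i k).symm
  have hdiag_ge : ∀ i, 1 / (L:ℝ) ≤ Bh i i := by
    intro i
    have h1 : (1:ℝ) = ∑ j, Bh j i := (hBh_col i).symm
    have h2 : ∑ j, Bh j i ≤ ∑ _j : Fin L, Bh i i := by
      apply Finset.sum_le_sum
      intro j _
      by_cases hj : j = i
      · subst hj; exact le_refl _
      · exact hdiag i j hj
    have h3 : ∑ _j : Fin L, Bh i i = L * Bh i i := by
      simp [Finset.sum_const, nsmul_eq_mul]
    rw [div_le_iff₀ hL]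
    nlinarith
  have hsplit : ∀ (M : Matrix (Fin L) (Fin L) ℝ),
      M.trace = M k k + ∑ i ∈ Finset.univ.erase k, M i i := by
    intro M
    rw [Matrix.trace]
    simp only [Matrix.diag]
    rw [← Finset.add_sum_erase _ _ (Finset.mem_univ k)]
  have hcard : (Finset.univ.erase k).card = L - 1 := by
    simp [Finset.card_erase_of_mem]
  have hBtr : B.trace = B k k + ((L - 1 : ℕ) : ℝ) * (1 / L) := by
    rw [hsplit B]
    congr 1
    rw [Finset.sum_congr rfl (fun i hi => hoff i i (Finset.ne_of_mem_erase hi))]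
    simp [hcard]
  have hBhtr_ge : Bh k k + ((L - 1 : ℕ) : ℝ) * (1 / (L:ℝ)) ≤ Bh.trace := by
    rw [hsplit Bh]
    have h4 : ((L - 1 : ℕ) : ℝ) * (1 / (L:ℝ)) = ∑ _i ∈ Finset.univ.erase k, (1 / (L:ℝ)) := by
      simp [hcard]
    rw [h4]
    exact add_le_add le_rfl (Finset.sum_le_sum fun i _ => hdiag_ge i)
  have hBkk_le : B k k ≤ Bh k k := by
    rw [← hmodel' k]
    calc ∑ j, Bh k j * p j ≤ ∑ j, Bh k k * p j := by
          apply Finset.sum_le_sum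
          intro j _
          by_cases hj : j = k
          · subst hj; exact le_refl _
          · exact mul_le_mul_of_nonneg_right (le_of_lt (hrow j hj)) (hp_nonneg j)
      _ = Bh k k := by rw [← Finset.mul_sum, hp_sum, mul_one]
  have hEq : Bh k k = B k k := by
    have h5 := htr
    rw [hBtr] at h5
    linarith [hBhtr_ge]
  have hsum0 : ∑ j, (Bh k k - Bh k j) * p j = 0 := by
    have h6 : ∑ j, (Bh k k - Bh k j) * p j
        = Bh k k * (∑ j, p j) - ∑ j, Bh k j * p j := by
      rw [Finset.mul_sum, ← Finset.sum_sub_distrib]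
      exact Finset.sum_congr rfl fun j _ => by ring
    rw [h6, hp_sum, mul_one, hmodel' k]
    linarith
  have hterm : ∀ j, j ≠ k → p j = 0 := by
    intro j hj
    have hnn : ∀ x ∈ Finset.univ, 0 ≤ (Bh k k - Bh k x) * p x := by
      intro x _
      by_cases hx : x = k
      · subst hx; simp
      · exact mul_nonneg (sub_nonneg.2 (le_of_lt (hrow x hx))) (hp_nonneg x)
    have h7 := (Finset.sum_eq_zero_iff_of_nonneg hnn).1 hsum0 j (Finset.mem_univ j)
    have hpos : 0 < Bh k k - Bh k j := sub_pos.2 (hrow j hj)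
    rcases mul_eq_zero.1 h7 with h | h
    · linarith
    · exact h
  have hpk : p k = 1 := by
    have h1 : ∑ j, p j = p k + ∑ j ∈ Finset.univ.erase k, p j :=
      (Finset.add_sum_erase _ _ (Finset.mem_univ k)).symm
    rw [Finset.sum_eq_zero (fun j hj => hterm j (Finset.ne_of_mem_erase hj))] at h1
    rw [hp_sum] at h1; linarith
  have hp : p = Pi.single k 1 := by
    funext j
    by_cases hj : j = k
    · subst hj; simp [hpk]
    · simp [Pi.single_apply, hj, hterm j hj]
  refine ⟨hp, ?_⟩
  intro r i
  have h := congrFun (hmodel r) i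
  rw [hp] at h
  simpa [Matrix.mulVec, dotProduct, Pi.single_apply, mul_ite] using h
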